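/- Let R be a DGA over A, I : R → R an A-linear degree-preserving map with I(1) = 1, I∘∂ = ∂∘I, and I(ab) = (−1)^{|a||b|} I(b)I(a) for homogeneous a, b, and F a DG right R-module. Let F^left be the DG left R-module with the same underlying complex as F and left action a·f := (−1)^{|a||f|} f·(I(a)) (this is indeed a DG left R-module). Let C_• be a free graded A-module with finite basis B (degrees ≥ 0), (m_{x,y}) a twisting cocycle for (R, C_•), M := R⊗_A C_• the DG left R-module with twisted differential ∂_M(a⊗x) = ∂a⊗x + (−1)^{|a|} Σ_y (a m_{x,y})⊗y and action b·(a⊗x) = (ba)⊗x, and set n_{y,x} := (−1)^{|x||y|+|x|+1} I(m_{x,y}). Let Hom_R(M, F^left) be the complex whose degree-d part (d ∈ ℤ, homological convention) consists of the A-linear maps ℓ : M → F with ℓ(M_i) ⊆ F_{i+d} and ℓ(a·ξ) = (−1)^{d|a|} a·ℓ(ξ) (action in F^left), with differential δℓ := ∂∘ℓ − (−1)^d ℓ∘∂_M; and let C^* be the cohomological twisted complex whose degree-k part is spanned by the elements f̄⊗y∨ with f ∈ F homogeneous, y ∈ B and |y| − |f| = k, with degree +1 differential d(f̄⊗y∨)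 = (∂f)¯⊗y∨ + (−1)^{|f|} Σ_{x∈B} (f·n_{y,x})¯ ⊗ x∨. Then the map Φ(f̄⊗y∨) := (−1)^{|y|} ℓ_{f,y}, where ℓ_{f,y} is the unique graded R-linear map M → F^left of degree |f|−|y| with ℓ_{f,y}(1⊗y) = f and ℓ_{f,y}(1⊗x) = 0 for all x ≠ y, identifies C^k bijectively with the degree −k part of Hom_R(M, F^left) and satisfies δ∘Φ = Φ∘d; i.e. Φ is an isomorphism of complexes. -/

import Mathlib

private lemma ee_smul {M : Type*} [AddCommGroup M] (m n : ℤ) (v : M) :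
    (Int.negOnePow m : ℤ) • (Int.negOnePow n : ℤ) • v = (Int.negOnePow (m + n) : ℤ) • v := by
  rw [smul_smul, ← Units.val_mul, ← Int.negOnePow_add]

private lemma e_congr {M : Type*} [AddCommGroup M] {m n : ℤ} (h : Even (m - n)) (v : M) :
    (Int.negOnePow m : ℤ) • v = (Int.negOnePow n : ℤ) • v := by
  rw [(Int.negOnePow_eq_iff m n).2 h]

private lemma e_cancel {M : Type*} [AddCommGroup M] (n : ℤ) (v : M) :
    (Int.negOnePow n : ℤ) • (Int.negOnePow n : ℤ) • v = v := by
  rw [ee_smul, e_congr (n := 0) (m := n + n) ⟨n, by ring⟩ v]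
  simp

private lemma e_neg {M : Type*} [AddCommGroup M] (n : ℤ) (v : M) :
    (Int.negOnePow (1 + n) : ℤ) • v = - ((Int.negOnePow n : ℤ) • v) := by
  rw [add_comm, Int.negOnePow_succ]
  push_cast
  rw [neg_smul]

private lemma single_smul {B R : Type*} [DecidableEq B] [Ring R] (a r : R) (x : B) :
    a • (Pi.single x r : B → R) = Pi.single x (a * r) := by
  funext y
  by_cases h : y = x <;> simp [Pi.single_apply, h]

/-- `PhiChar ℛ act I deg ℓ g` says that the `A`-linear map `ℓ : R ⊗ C → F` is the image
`Φ(g)` of the cochain `g = ∑ y (g y) ⊗ y∨` under the map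
`Φ(f̄ ⊗ y∨) = (-1)^{|y|} ℓ_{f,y}`, i.e.
`ℓ (a ⊗ x) = (-1)^{|x| + |a||x|} (g x) · I(a)` for homogeneous `a`. -/
def PhiChar {A : Type*} [CommRing A] {R : Type*} [Ring R] [Algebra A R]
    {F : Type*} [AddCommGroup F] [Module A F] {B : Type*} [DecidableEq B]
    (ℛ : ℤ → Submodule A R) (act : F →ₗ[A] R →ₗ[A] F) (I : R →ₗ[A] R)
    (deg : B → ℤ) (ℓ : (B → R) →ₗ[A] F) (g : B → F) : Prop :=
  ∀ i : ℤ, ∀ a ∈ ℛ i, ∀ x : B,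
    ℓ (Pi.single x a) = (Int.negOnePow (deg x + i * deg x) : ℤ) • act (g x) (I a)

/-- Let `I` be a graded anti-automorphism of the DGA `R` with `I 1 = 1`, and let
`F` be a DG right `R`-module; `F^left` denotes `F` with the left action
`a · f = (-1)^{|a||f|} f · I(a)`. Then: `F^left` is a DG left `R`-module; and for each `k : ℤ`
the map `Φ` (encoded by `PhiChar`) identifies the degree-`k` part of the cohomological twisted
complex `C^*` (functions `g : B → F` with `g y ∈ ℱ (|y| - k)`) bijectively with the degree
`-k` part of `Hom_R(R ⊗ C, F^left)` (maps `ℓ` satisfying the grading and graded `R`-linearity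
conditions), and intertwines the differentials: `δ ∘ Φ = Φ ∘ d`. -/
theorem statement15
    {A : Type*} [CommRing A] {R : Type*} [Ring R] [Algebra A R]
    (ℛ : ℤ → Submodule A R) [GradedRing ℛ]
    (d : R →ₗ[A] R)
    (hd_mem : ∀ i : ℤ, ∀ a ∈ ℛ i, d a ∈ ℛ (i - 1))
    (hd_sq : ∀ a : R, d (d a) = 0)
    (hd_leibniz : ∀ i : ℤ, ∀ a ∈ ℛ i, ∀ b : R,
      d (a * b) = d a * b + (Int.negOnePow i : ℤ) • (a * d b))
    (I : R →ₗ[A] R)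
    (hI_one : I 1 = 1)
    (hI_deg : ∀ i : ℤ, ∀ a ∈ ℛ i, I a ∈ ℛ i)
    (hI_d : ∀ a : R, I (d a) = d (I a))
    (hI_mul : ∀ (i j : ℤ), ∀ a ∈ ℛ i, ∀ b ∈ ℛ j,
      I (a * b) = (Int.negOnePow (i * j) : ℤ) • (I b * I a))
    {F : Type*} [AddCommGroup F] [Module A F]
    (ℱ : ℤ → Submodule A F) [DirectSum.Decomposition ℱ]
    (dF : F →ₗ[A] F)
    (hdF_mem : ∀ i : ℤ, ∀ f ∈ ℱ i, dF f ∈ ℱ (i - 1))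
    (hdF_sq : ∀ f : F, dF (dF f) = 0)
    (act : F →ₗ[A] R →ₗ[A] F)
    (hact_one : ∀ f : F, act f 1 = f)
    (hact_mul : ∀ (f : F) (a b : R), act (act f a) b = act f (a * b))
    (hact_mem : ∀ (i j : ℤ), ∀ f ∈ ℱ i, ∀ a ∈ ℛ j, act f a ∈ ℱ (i + j))
    (hact_leibniz : ∀ i : ℤ, ∀ f ∈ ℱ i, ∀ a : R,
      dF (act f a) = act (dF f) a + (Int.negOnePow i : ℤ) • act f (d a))
    {B : Type*} [Fintype B] [DecidableEq B]
    (deg : B → ℤ) (hdeg : ∀ x : B, 0 ≤ deg x)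
    (m : B → B → R)
    (hm_mem : ∀ x y : B, m x y ∈ ℛ (deg x - deg y - 1))
    (hm_zero : ∀ x y : B, ¬ deg y < deg x → m x y = 0)
    (hm_mc : ∀ x y : B, d (m x y) =
      ∑ z : B, (Int.negOnePow (deg x - deg z) : ℤ) • (m x z * m z y))
    (dM : (B → R) →ₗ[A] (B → R))
    (hdM : ∀ i : ℤ, ∀ a ∈ ℛ i, ∀ x : B,
      dM (Pi.single x a) = Pi.single x (d a) +
        (Int.negOnePow i : ℤ) • (fun y : B => a * m x y)) :
    ((∀ j : ℤ, ∀ f ∈ ℱ j, act f (I 1) = f) ∧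
      (∀ (i₁ i₂ j : ℤ), ∀ a ∈ ℛ i₁, ∀ b ∈ ℛ i₂, ∀ f ∈ ℱ j,
        (Int.negOnePow (i₁ * (i₂ + j) + i₂ * j) : ℤ) • act (act f (I b)) (I a) =
          (Int.negOnePow ((i₁ + i₂) * j) : ℤ) • act f (I (a * b))) ∧
      (∀ (i j : ℤ), ∀ a ∈ ℛ i, ∀ f ∈ ℱ j,
        dF ((Int.negOnePow (i * j) : ℤ) • act f (I a)) =
          (Int.negOnePow ((i - 1) * j) : ℤ) • act f (I (d a)) +
            (Int.negOnePow (i + i * (j - 1)) : ℤ) • act (dF f) (I a))) ∧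
    ∀ k : ℤ,
      (∀ g : B → F, (∀ y : B, g y ∈ ℱ (deg y - k)) →
        ∀ ℓ : (B → R) →ₗ[A] F, PhiChar ℛ act I deg ℓ g →
          (∀ i : ℤ, ∀ c : B → R, (∀ x : B, c x ∈ ℛ (i - deg x)) → ℓ c ∈ ℱ (i - k)) ∧
          (∀ i : ℤ, ∀ a ∈ ℛ i, ∀ j : ℤ, ∀ c : B → R, (∀ x : B, c x ∈ ℛ (j - deg x)) →
            ℓ (a • c) = (Int.negOnePow (i * j) : ℤ) • act (ℓ c) (I a))) ∧
      (∀ g₁ g₂ : B → F, (∀ y : B, g₁ y ∈ ℱ (deg y - k)) →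
        (∀ y : B, g₂ y ∈ ℱ (deg y - k)) →
        ∀ ℓ : (B → R) →ₗ[A] F,
          PhiChar ℛ act I deg ℓ g₁ → PhiChar ℛ act I deg ℓ g₂ → g₁ = g₂) ∧
      (∀ ℓ : (B → R) →ₗ[A] F,
        (∀ i : ℤ, ∀ c : B → R, (∀ x : B, c x ∈ ℛ (i - deg x)) → ℓ c ∈ ℱ (i - k)) →
        (∀ i : ℤ, ∀ a ∈ ℛ i, ∀ j : ℤ, ∀ c : B → R, (∀ x : B, c x ∈ ℛ (j - deg x)) →
          ℓ (a • c) = (Int.negOnePow (i * j) : ℤ) • act (ℓ c) (I a)) →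
        ∃ g : B → F, (∀ y : B, g y ∈ ℱ (deg y - k)) ∧ PhiChar ℛ act I deg ℓ g) ∧
      (∀ g : B → F, (∀ y : B, g y ∈ ℱ (deg y - k)) →
        ∀ ℓ ℓ' : (B → R) →ₗ[A] F, PhiChar ℛ act I deg ℓ g →
          PhiChar ℛ act I deg ℓ'
            (fun x => dF (g x) + ∑ y : B, (Int.negOnePow (deg y - k) : ℤ) •
              act (g y) ((Int.negOnePow (deg x * deg y + deg x + 1) : ℤ) • I (m x y))) →
          ∀ c : B → R, dF (ℓ c) - (Int.negOnePow k : ℤ) • ℓ (dM c) = ℓ' c) := by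
  constructor
  · refine ⟨fun j f _ => by rw [hI_one, hact_one], ?_, ?_⟩
    · intro i₁ i₂ j a ha b hb f _
      rw [hI_mul i₁ i₂ a ha b hb, map_zsmul, ← hact_mul f (I b) (I a), ee_smul]
      exact e_congr ⟨0, by ring⟩ _
    · intro i j a ha f hf
      rw [map_zsmul, hact_leibniz j f hf, ← hI_d, smul_add, ee_smul,
        e_congr (m := i * j) (n := i + i * (j - 1)) ⟨0, by ring⟩,
        e_congr (m := i * j + j) (n := (i - 1) * j) ⟨j, by ring⟩, add_comm]
  intro k
  refine ⟨?_, ?_, ?_, ?_⟩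
  · -- image of Φ has the grading and linearity properties
    intro g hg ℓ hℓ
    constructor
    · intro i c hc
      have hdc : ℓ c = ∑ x : B, ℓ (Pi.single x (c x)) := by
        rw [← map_sum, Finset.univ_sum_single]
      rw [hdc]
      refine Submodule.sum_mem _ fun x _ => ?_
      rw [hℓ (i - deg x) (c x) (hc x) x]
      have hmem := hact_mem (deg x - k) (i - deg x) (g x) (hg x) (I (c x))
        (hI_deg _ _ (hc x))
      rw [show deg x - k + (i - deg x) = i - k by ring] at hmem
      exact zsmul_mem hmem _
    · intro i a ha j c hc
      have hsum : a • c = ∑ x : B, Pi.single x (a * c x) := by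
        conv_lhs => rw [← Finset.univ_sum_single (a • c)]
        exact Finset.sum_congr rfl fun x _ => by rw [Pi.smul_apply, smul_eq_mul]
      have hdc : ℓ c = ∑ x : B, ℓ (Pi.single x (c x)) := by
        rw [← map_sum, Finset.univ_sum_single]
      rw [hsum, hdc]
      simp only [map_sum, LinearMap.sum_apply, Finset.smul_sum]
      refine Finset.sum_congr rfl fun x _ => ?_
      rw [hℓ (i + (j - deg x)) (a * c x) (SetLike.mul_mem_graded ha (hc x)) x,
        hI_mul i (j - deg x) a ha (c x) (hc x), map_zsmul,
        ← hact_mul (g x) (I (c x)) (I a), ee_smul,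
        hℓ (j - deg x) (c x) (hc x) x, map_zsmul, LinearMap.smul_apply, ee_smul]
      exact e_congr ⟨0, by ring⟩ _
  · -- injectivity
    intro g₁ g₂ _ _ ℓ h₁ h₂
    funext x
    have e₁ := h₁ 0 1 (SetLike.one_mem_graded ℛ) x
    have e₂ := h₂ 0 1 (SetLike.one_mem_graded ℛ) x
    rw [hI_one, hact_one] at e₁ e₂
    have e := e₁.symm.trans e₂
    have e' := congrArg (fun v => (Int.negOnePow (deg x + 0 * deg x) : ℤ) • v) e
    simpa only [e_cancel] using e'
  · -- surjectivity
    intro ℓ hgrad hlin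
    have hmemb : ∀ y : B, ∀ x : B, (Pi.single y (1:R) : B → R) x ∈ ℛ (deg y - deg x) := by
      intro y x
      by_cases h : x = y
      · subst h
        rw [Pi.single_eq_same]
        simpa using SetLike.one_mem_graded ℛ
      · rw [Pi.single_eq_of_ne h]
        exact zero_mem _
    refine ⟨fun x => (Int.negOnePow (deg x) : ℤ) • ℓ (Pi.single x 1), fun y => ?_, ?_⟩
    · exact zsmul_mem (hgrad (deg y) (Pi.single y 1) (hmemb y)) _
    · intro i a ha x
      show ℓ (Pi.single x a) = (Int.negOnePow (deg x + i * deg x) : ℤ) •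
        act ((Int.negOnePow (deg x) : ℤ) • ℓ (Pi.single x 1)) (I a)
      rw [show (Pi.single x a : B → R) = a • (Pi.single x 1 : B → R) by
          rw [single_smul, mul_one],
        hlin i a ha (deg x) (Pi.single x 1) (hmemb x), map_zsmul, LinearMap.smul_apply,
        ee_smul]
      exact e_congr ⟨-deg x, by ring⟩ _
  · -- chain map property
    intro g hg ℓ ℓ' hℓ hℓ' c
    have key : ∀ (x : B) (r : R),
        dF (ℓ (Pi.single x r)) - (Int.negOnePow k : ℤ) • ℓ (dM (Pi.single x r)) =
          ℓ' (Pi.single x r) := by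
      intro x r
      induction r using DirectSum.Decomposition.inductionOn ℛ with
      | zero => simp
      | add a b pa pb =>
        simp only [Pi.single_add, map_add, smul_add]
        rw [← pa, ← pb]
        abel
      | homogeneous m' =>
        rename_i i
        obtain ⟨a, ha⟩ := m'
        show dF (ℓ (Pi.single x a)) - (Int.negOnePow k : ℤ) • ℓ (dM (Pi.single x a)) =
          ℓ' (Pi.single x a)
        have hla := hℓ i a ha x
        have hlda := hℓ (i - 1) (d a) (hd_mem i a ha) x
        have hdm := hdM i a ha x
        have hfun : (fun y : B => a * m x y) = ∑ y : B, Pi.single y (a * m x y) :=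
          (Finset.univ_sum_single _).symm
        have hl'a : ℓ' (Pi.single x a) = (Int.negOnePow (deg x + i * deg x) : ℤ) •
            act (dF (g x) + ∑ y : B, (Int.negOnePow (deg y - k) : ℤ) •
              act (g y) ((Int.negOnePow (deg x * deg y + deg x + 1) : ℤ) • I (m x y)))
              (I a) := hℓ' i a ha x
        have hLdF : dF (ℓ (Pi.single x a)) =
            (Int.negOnePow (deg x + i * deg x) : ℤ) • act (dF (g x)) (I a) +
              (Int.negOnePow (deg x + i * deg x + (deg x - k)) : ℤ) •
                act (g x) (I (d a)) := by
          rw [hla, map_zsmul, hact_leibniz (deg x - k) (g x) (hg x) (I a), ← hI_d,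
            smul_add, ee_smul]
        have hLdM : ℓ (dM (Pi.single x a)) =
            (Int.negOnePow (deg x + (i - 1) * deg x) : ℤ) • act (g x) (I (d a)) +
              ∑ y : B, (Int.negOnePow (i + (deg y + (i + (deg x - deg y - 1)) * deg y +
                i * (deg x - deg y - 1))) : ℤ) • act (g y) (I (m x y) * I a) := by
          rw [hdm, map_add, map_zsmul, hlda, hfun, map_sum, Finset.smul_sum]
          congr 1
          refine Finset.sum_congr rfl fun y _ => ?_
          rw [hℓ (i + (deg x - deg y - 1)) (a * m x y)
              (SetLike.mul_mem_graded ha (hm_mem x y)) y,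
            hI_mul i (deg x - deg y - 1) a ha (m x y) (hm_mem x y), map_zsmul,
            ee_smul, ee_smul]
          exact e_congr ⟨0, by ring⟩ _
        have hR : ℓ' (Pi.single x a) =
            (Int.negOnePow (deg x + i * deg x) : ℤ) • act (dF (g x)) (I a) +
              ∑ y : B, (Int.negOnePow (deg x + i * deg x + ((deg y - k) +
                (deg x * deg y + deg x + 1))) : ℤ) •
                act (g y) (I (m x y) * I a) := by
          rw [hl'a]
          simp only [map_add, map_sum, map_zsmul, LinearMap.add_apply,
            LinearMap.sum_apply, LinearMap.smul_apply, hact_mul, smul_add,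
            Finset.smul_sum, ee_smul]
        rw [hLdF, hLdM, hR, smul_add, Finset.smul_sum]
        simp only [ee_smul]
        rw [e_congr (m := deg x + i * deg x + (deg x - k))
          (n := k + (deg x + (i - 1) * deg x)) ⟨deg x - k, by ring⟩]
        have hSy : ∀ y : B, (Int.negOnePow (k + (i + (deg y + (i + (deg x - deg y - 1)) *
              deg y + i * (deg x - deg y - 1)))) : ℤ) • act (g y) (I (m x y) * I a) =
            -((Int.negOnePow (deg x + i * deg x + ((deg y - k) +
              (deg x * deg y + deg x + 1))) : ℤ) • act (g y) (I (m x y) * I a)) := by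
          intro y
          obtain ⟨r, hr⟩ := Int.even_mul_succ_self (deg y)
          rw [e_congr (n := 1 + (deg x + i * deg x + ((deg y - k) +
            (deg x * deg y + deg x + 1)))) ⟨k - 1 - deg x - r, by linear_combination -hr⟩,
            e_neg]
        simp only [hSy, Finset.sum_neg_distrib]
        abel
    conv_lhs => rw [← Finset.univ_sum_single c]
    rw [show ℓ' c = ∑ x : B, ℓ' (Pi.single x (c x)) by rw [← map_sum, Finset.univ_sum_single]]
    simp only [map_sum, Finset.smul_sum, ← Finset.sum_sub_distrib]
    exact Finset.sum_congr rfl fun x _ => key x (c x)
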